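/- Let n ≥ 1 be an odd squarefree integer and suppose n = β₀β₁β₂β₃ with β₀, β₁, β₂, β₃ ∈ ℤ[i]. Then there exist units η₀, …, η₃ ∈ {±1, ±i} with η₀η₁η₂η₃ = 1, positive integers b₀, …, b₃, and primitive primary Gaussian integers z_{kℓ} (0 ≤ k ≠ ℓ ≤ 3) with z_{ℓk} = conjugate of z_{kℓ}, such that β_k = η_k b_k ∏_{ℓ≠k} z_{kℓ} and β_k/b_k is primitive, for each k. Moreover, this decomposition is unique. -/

import Mathlib

/-- A Gaussian integer `x + iy` is primitive if `gcd(x, y) = 1`. -/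
def GIsPrimitive (z : GaussianInt) : Prop := Int.gcd z.re z.im = 1

/-- A Gaussian integer is primary if it is `≡ 1 (mod 2(1+i))`. -/
def GIsPrimary (z : GaussianInt) : Prop :=
  (2 * (⟨1, 1⟩ : GaussianInt)) ∣ (z - 1)

/-- Complex conjugation on Gaussian integers. -/
def gconj (z : GaussianInt) : GaussianInt := ⟨z.re, -z.im⟩

namespace SGaux
open Zsqrtd Finset

lemma gconj_eq_star (z : GaussianInt) : gconj z = star z := rfl

lemma mu_dvd_iff (z : GaussianInt) :
    (2 * (⟨1, 1⟩ : GaussianInt)) ∣ z ↔ (4 ∣ z.re + z.im ∧ 4 ∣ z.im - z.re) := by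
  constructor
  · rintro ⟨t, rfl⟩
    constructor
    · exact ⟨t.re, by simp [Zsqrtd.re_mul, Zsqrtd.im_mul]; ring⟩
    · exact ⟨t.im, by simp [Zsqrtd.re_mul, Zsqrtd.im_mul]; ring⟩
  · rintro ⟨⟨a, ha⟩, ⟨c, hc⟩⟩
    refine ⟨⟨a, c⟩, ?_⟩
    have h1 : (2 * (⟨1, 1⟩ : GaussianInt)) = (⟨2, 2⟩ : GaussianInt) := by
      ext <;> simp
    rw [h1]
    ext <;> simp [Zsqrtd.re_mul, Zsqrtd.im_mul] <;> omega

lemma primary_iff (z : GaussianInt) :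
    GIsPrimary z ↔ 4 ∣ (z.re - 1) + z.im ∧ 4 ∣ z.im - (z.re - 1) := by
  unfold GIsPrimary
  rw [mu_dvd_iff]
  simp only [Zsqrtd.re_sub, Zsqrtd.im_sub, Zsqrtd.re_one, Zsqrtd.im_one]
  omega

lemma unit_cases {u : GaussianInt} (h : IsUnit u) :
    u = 1 ∨ u = -1 ∨ u = ⟨0, 1⟩ ∨ u = ⟨0, -1⟩ := by
  have h1 := Zsqrtd.norm_eq_one_iff.mpr h
  have h2 : u.norm = u.re * u.re + u.im * u.im := by
    rw [Zsqrtd.norm_def]; ring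
  have h3 : u.re * u.re + u.im * u.im = 1 := by
    have := Int.natAbs_eq u.norm
    have h4 : 0 ≤ u.norm := by nlinarith [mul_self_nonneg u.re, mul_self_nonneg u.im]
    omega
  have hre : u.re = 0 ∨ u.re = 1 ∨ u.re = -1 := by
    have : u.re ≤ 1 ∧ -1 ≤ u.re := by
      constructor <;> nlinarith [mul_self_nonneg u.re, mul_self_nonneg u.im]
    obtain ⟨a, b⟩ := this; omega
  have him : u.im = 0 ∨ u.im = 1 ∨ u.im = -1 := by
    have : u.im ≤ 1 ∧ -1 ≤ u.im := by
      constructor <;> nlinarith [mul_self_nonneg u.re, mul_self_nonneg u.im]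
    obtain ⟨a, b⟩ := this; omega
  rcases hre with h | h | h <;> rcases him with h' | h' | h' <;>
    simp_all [Zsqrtd.ext_iff]

lemma primary_unit_eq {u z : GaussianInt} (hu : IsUnit u) (hz : GIsPrimary z)
    (huz : GIsPrimary (u * z)) : u = 1 := by
  rw [primary_iff] at hz huz
  rcases unit_cases hu with rfl | rfl | rfl | rfl
  · rfl
  all_goals (exfalso; simp [Zsqrtd.re_mul, Zsqrtd.im_mul] at huz; omega)

lemma primary_normalize {z : GaussianInt} (hodd : ¬ (2:ℤ) ∣ (z.re + z.im)) :
    ∃ u : GaussianInt, IsUnit u ∧ GIsPrimary (u * z) := by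
  have hs : (z.re + z.im) % 4 = 1 ∨ (z.re + z.im) % 4 = 3 := by omega
  have ht : (z.im - z.re) % 4 = 1 ∨ (z.im - z.re) % 4 = 3 := by omega
  rcases hs with hs | hs <;> rcases ht with ht | ht
  · exact ⟨⟨0, -1⟩, by
      refine ⟨⟨⟨⟨0,-1⟩,⟨0,1⟩, by ext <;> simp [Zsqrtd.re_mul, Zsqrtd.im_mul], by ext <;> simp [Zsqrtd.re_mul, Zsqrtd.im_mul]⟩, rfl⟩, ?_⟩
      rw [primary_iff]; simp [Zsqrtd.re_mul, Zsqrtd.im_mul]; omega⟩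
  · exact ⟨1, isUnit_one, by rw [primary_iff]; simp; omega⟩
  · exact ⟨-1, isUnit_one.neg, by rw [primary_iff]; simp [Zsqrtd.re_mul, Zsqrtd.im_mul]; omega⟩
  · exact ⟨⟨0, 1⟩, by
      refine ⟨⟨⟨⟨0,1⟩,⟨0,-1⟩, by ext <;> simp [Zsqrtd.re_mul, Zsqrtd.im_mul], by ext <;> simp [Zsqrtd.re_mul, Zsqrtd.im_mul]⟩, rfl⟩, ?_⟩
      rw [primary_iff]; simp [Zsqrtd.re_mul, Zsqrtd.im_mul]; omega⟩

lemma star_primary {z : GaussianInt} (h : GIsPrimary z) : GIsPrimary (star z) := by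
  rw [primary_iff] at h ⊢
  simp only [Zsqrtd.re_star, Zsqrtd.im_star]
  omega

lemma primary_eq_of_unit_mul {x a b : GaussianInt} (ha : IsUnit a) (hb : IsUnit b)
    (hpa : GIsPrimary (a * x)) (hpb : GIsPrimary (b * x)) : a * x = b * x := by
  obtain ⟨B, rfl⟩ := hb
  have h1 : IsUnit (a * ((B⁻¹ : GaussianIntˣ) : GaussianInt)) :=
    ha.mul (Units.isUnit _)
  have h2 : GIsPrimary ((a * ((B⁻¹ : GaussianIntˣ) : GaussianInt)) * ((B : GaussianInt) * x)) := by
    have : (a * ((B⁻¹ : GaussianIntˣ) : GaussianInt)) * ((B : GaussianInt) * x) = a * x := by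
      have hBB : ((B⁻¹ : GaussianIntˣ) : GaussianInt) * (B : GaussianInt) = 1 := by
        exact_mod_cast B.inv_mul
      calc (a * ((B⁻¹ : GaussianIntˣ) : GaussianInt)) * ((B : GaussianInt) * x)
          = a * (((B⁻¹ : GaussianIntˣ) : GaussianInt) * (B : GaussianInt)) * x := by ring
        _ = a * x := by rw [hBB]; ring
    rwa [this]
  have h3 := primary_unit_eq h1 hpb h2
  have h4 : a = (B : GaussianInt) := by
    have := congrArg (fun t => t * (B : GaussianInt)) h3
    simpa [mul_assoc, Units.inv_mul, B.inv_mul] using this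
  rw [h4]

lemma content_dvd {c : ℤ} {w : GaussianInt} (h : (c : GaussianInt) ∣ w) :
    c.natAbs ∣ Int.gcd w.re w.im := by
  rw [Zsqrtd.intCast_dvd] at h
  exact Nat.dvd_gcd (Int.natAbs_dvd_natAbs.mpr h.1) (Int.natAbs_dvd_natAbs.mpr h.2)

lemma prim_of_dvd {z w : GaussianInt} (hw : GIsPrimitive w) (h : z ∣ w) :
    GIsPrimitive z := by
  have h1 : ((Int.gcd z.re z.im : ℤ) : GaussianInt) ∣ z :=
    (Zsqrtd.intCast_dvd _ _).mpr ⟨Int.gcd_dvd_left _ _, Int.gcd_dvd_right _ _⟩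
  have h2 := content_dvd (h1.trans h)
  rw [hw] at h2
  simpa [GIsPrimitive] using Nat.dvd_one.mp (by simpa using h2)

lemma natCast_mul_comp (m : ℕ) (w : GaussianInt) :
    ((m : GaussianInt) * w) = ⟨m * w.re, m * w.im⟩ := by
  have : (m : GaussianInt) = ⟨(m : ℤ), 0⟩ := by ext <;> simp
  rw [this]; ext <;> simp [Zsqrtd.re_mul, Zsqrtd.im_mul]

lemma exists_content {z : GaussianInt} (hz : z ≠ 0) :
    0 < Int.gcd z.re z.im ∧
    ∃ w, GIsPrimitive w ∧ z = ((Int.gcd z.re z.im : ℕ) : GaussianInt) * w := by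
  have hg : 0 < Int.gcd z.re z.im := by
    rw [Int.gcd_pos_iff]
    by_contra hc
    push_neg at hc
    exact hz (by ext <;> simp [hc.1, hc.2])
  refine ⟨hg, ⟨z.re / Int.gcd z.re z.im, z.im / Int.gcd z.re z.im⟩, ?_, ?_⟩
  · exact Int.gcd_div_gcd_div_gcd hg
  · rw [natCast_mul_comp]
    ext <;> simp <;>
      [exact (Int.mul_ediv_cancel' (Int.gcd_dvd_left _ _)).symm;
       exact (Int.mul_ediv_cancel' (Int.gcd_dvd_right _ _)).symm]

lemma content_unique {z w : GaussianInt} {b : ℕ} (hw : GIsPrimitive w)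
    (h : z = (b : GaussianInt) * w) : b = Int.gcd z.re z.im := by
  subst h
  rw [natCast_mul_comp]
  show b = Int.gcd ((b:ℤ) * w.re) ((b:ℤ) * w.im)
  rw [Int.gcd_mul_left, hw]
  simp

lemma gnorm_dvd {x y : GaussianInt} (h : x ∣ y) : x.norm ∣ y.norm := by
  obtain ⟨c, rfl⟩ := h
  exact ⟨c.norm, (Zsqrtd.norm_mul x c)⟩

lemma gnorm_natCast (n : ℕ) : (n : GaussianInt).norm = (n : ℤ) * (n : ℤ) := by
  rw [Zsqrtd.norm_def]; simp

lemma star_dvd {x y : GaussianInt} (h : x ∣ y) : star x ∣ star y := by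
  obtain ⟨c, rfl⟩ := h
  exact ⟨star c, by rw [star_mul, mul_comm]⟩

lemma star_prime {π : GaussianInt} (h : Prime π) : Prime (star π) := by
  refine ⟨by simpa using h.1, by simpa using h.2.1, fun a b hab => ?_⟩
  have : π ∣ star a * star b := by
    have := star_dvd hab
    rwa [star_star, star_mul, mul_comm] at this
  rcases h.2.2 _ _ this with hc | hc
  · exact Or.inl (by simpa using star_dvd hc)
  · exact Or.inr (by simpa using star_dvd hc)

lemma odd_re_add_im {z : GaussianInt} (h : ¬ (2:ℤ) ∣ z.norm) : ¬ (2:ℤ) ∣ (z.re + z.im) := by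
  intro h2
  apply h
  have hn : z.norm = z.re * z.re + z.im * z.im := by rw [Zsqrtd.norm_def]; ring
  obtain ⟨k, hk⟩ := h2
  have : z.re = 2 * k - z.im := by omega
  rw [hn, this]
  exact ⟨2*k*k - 2*k*z.im + z.im*z.im, by ring⟩

/-- An odd squarefree natural number is squarefree in ℤ[i]. -/
lemma sfG {n : ℕ} (hodd : Odd n) (hsf : Squarefree n) : Squarefree (n : GaussianInt) := by
  have hn0 : n ≠ 0 := hsf.ne_zero
  have hsfZ : Squarefree (n : ℤ) := Int.squarefree_natCast.mpr hsf
  have hnG0 : (n : GaussianInt) ≠ 0 := by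
    intro hc
    exact hn0 (by simpa using congrArg Zsqrtd.re hc)
  intro x hx
  by_contra hxu
  have hx0 : x ≠ 0 := by
    rintro rfl
    exact hnG0 (by simpa using hx)
  obtain ⟨π, hirr, hdvd⟩ := WfDvdMonoid.exists_irreducible_factor hxu hx0
  have hπ : Prime π := hirr.prime
  have h2 : π * π ∣ (n : GaussianInt) := (mul_dvd_mul hdvd hdvd).trans hx
  have hπn : π ∣ (n : GaussianInt) := dvd_of_mul_right_dvd h2
  have hNodd : ¬ (2:ℤ) ∣ π.norm := by
    intro hc
    have h3 : π.norm ∣ (n:ℤ) * (n:ℤ) := by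
      have := gnorm_dvd hπn; rwa [gnorm_natCast] at this
    have h4 : (2:ℤ) ∣ (n:ℤ) * (n:ℤ) := hc.trans h3
    have h5 : ¬ (2:ℤ) ∣ (n:ℤ) := by
      obtain ⟨m, hm⟩ := hodd
      omega
    rcases (Int.Prime.dvd_mul' Nat.prime_two h4) with h | h <;> exact h5 h
  rcases EuclideanDomain.dvd_or_coprime π (star π) hπ.irreducible with hbad | hcop
  · have hsd : star π ∣ π := by
      have := star_dvd hbad
      rwa [star_star] at this
    have hass : Associated π (star π) := associated_of_dvd_dvd hbad hsd
    obtain ⟨u, hu⟩ := hass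
    rcases unit_cases u.isUnit with h | h | h | h <;> rw [h] at hu
    · -- star π = π : imaginary part zero, π is a rational integer
      rw [mul_one] at hu
      have him : π.im = 0 := by
        have := congrArg Zsqrtd.im hu
        simp at this
        omega
      have hπeq : π = ((π.re : ℤ) : GaussianInt) := by ext <;> simp [him]
      have hd : ((π.re * π.re : ℤ) : GaussianInt) ∣ ((n:ℤ) : GaussianInt) := by
        push_cast
        rw [← hπeq]
        exact_mod_cast h2
      have h8 : π.re * π.re ∣ (n : ℤ) := (Zsqrtd.intCast_dvd_intCast _ _).mp hd
      have h9 : IsUnit (π.re) := hsfZ _ h8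
      refine hπ.2.1 ?_
      rw [hπeq]
      exact h9.map (Int.castRingHom GaussianInt)
    · -- star π = -π : real part zero
      have hre : π.re = 0 := by
        have := congrArg Zsqrtd.re hu
        simp [Zsqrtd.re_mul] at this
        omega
      have hsq : π * π = ((-(π.im * π.im) : ℤ) : GaussianInt) := by
        ext <;> simp [Zsqrtd.re_mul, Zsqrtd.im_mul, hre]
      have hd : ((-(π.im * π.im) : ℤ) : GaussianInt) ∣ ((n:ℤ) : GaussianInt) := by
        rw [← hsq]; exact_mod_cast h2
      have h8 : π.im * π.im ∣ (n : ℤ) :=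
        (neg_dvd).mp ((Zsqrtd.intCast_dvd_intCast _ _).mp hd)
      have h9 : IsUnit (π.im) := hsfZ _ h8
      refine hπ.2.1 (Zsqrtd.norm_eq_one_iff.mp ?_)
      rcases Int.isUnit_iff.mp h9 with h | h <;>
        simp [Zsqrtd.norm_def, hre, h]
    · have hre : π.re = -π.im := by
        have := congrArg Zsqrtd.re hu
        simp [Zsqrtd.re_mul] at this
        omega
      exact hNodd ⟨π.im * π.im, by rw [Zsqrtd.norm_def, hre]; ring⟩
    · have hre : π.re = π.im := by
        have := congrArg Zsqrtd.re hu
        simp [Zsqrtd.re_mul] at this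
        omega
      exact hNodd ⟨π.im * π.im, by rw [Zsqrtd.norm_def, hre]; ring⟩
  · have h2' : star π * star π ∣ (n : GaussianInt) := by
      have := star_dvd h2
      rwa [star_mul, star_natCast] at this
    have hcop2 : IsCoprime (π * π) (star π * star π) :=
      ((hcop.mul_right hcop).mul_left (hcop.mul_right hcop))
    have h6 : (π * π) * (star π * star π) ∣ (n : GaussianInt) := hcop2.mul_dvd h2 h2'
    have h7 : ((π.norm * π.norm : ℤ) : GaussianInt) ∣ ((n : ℤ) : GaussianInt) := by
      push_cast
      rw [Zsqrtd.norm_eq_mul_conj]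
      have : π * star π * (π * star π) = π * π * (star π * star π) := by ring
      rw [this]
      exact_mod_cast h6
    have h8 : π.norm * π.norm ∣ (n : ℤ) := (Zsqrtd.intCast_dvd_intCast _ _).mp h7
    have h9 : IsUnit π.norm := hsfZ _ h8
    exact hπ.2.1 (Zsqrtd.norm_eq_one_iff.mp
      (by rcases Int.isUnit_iff.mp h9 with h | h <;> simp [h]))

/-- A prime dividing a primitive Gaussian integer of odd norm is coprime to its
conjugate, and its conjugate does not divide the primitive element. -/
lemma prime_dvd_primitive {π w : GaussianInt} (hπ : Prime π) (hw : GIsPrimitive w)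
    (hd : π ∣ w) (hwodd : ¬ (2:ℤ) ∣ w.norm) :
    IsCoprime π (star π) ∧ ¬ (star π ∣ w) := by
  have hπodd : ¬ (2:ℤ) ∣ π.norm := fun hc => hwodd (hc.trans (gnorm_dvd hd))
  have hcop : IsCoprime π (star π) := by
    rcases EuclideanDomain.dvd_or_coprime π (star π) hπ.irreducible with hbad | hcop
    · exfalso
      have hsd : star π ∣ π := by
        have := star_dvd hbad
        rwa [star_star] at this
      obtain ⟨u, hu⟩ := associated_of_dvd_dvd hbad hsd
      rcases unit_cases u.isUnit with h | h | h | h <;> rw [h] at hu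
      · rw [mul_one] at hu
        have him : π.im = 0 := by
          have := congrArg Zsqrtd.im hu
          simp at this
          omega
        have hπeq : π = ((π.re : ℤ) : GaussianInt) := by ext <;> simp [him]
        have h8 : (π.re).natAbs ∣ Int.gcd w.re w.im := content_dvd (hπeq ▸ hd)
        rw [hw, Nat.dvd_one] at h8
        exact hπ.2.1 (Zsqrtd.norm_eq_one_iff.mp (by
          rw [Zsqrtd.norm_def, him]
          simp only [mul_zero, sub_zero]
          rw [Int.natAbs_mul, h8]))
      · have hre : π.re = 0 := by
          have := congrArg Zsqrtd.re hu
          simp [Zsqrtd.re_mul] at this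
          omega
        have hπd : ((π.im : ℤ) : GaussianInt) ∣ π :=
          ⟨⟨0, 1⟩, by ext <;> simp [Zsqrtd.re_mul, Zsqrtd.im_mul, hre]⟩
        have h8 : (π.im).natAbs ∣ Int.gcd w.re w.im := content_dvd (hπd.trans hd)
        rw [hw, Nat.dvd_one] at h8
        exact hπ.2.1 (Zsqrtd.norm_eq_one_iff.mp (by
          have : π.norm = π.im * π.im := by rw [Zsqrtd.norm_def, hre]; ring
          rw [this, Int.natAbs_mul, h8]))
      · have hre : π.re = -π.im := by
          have := congrArg Zsqrtd.re hu
          simp [Zsqrtd.re_mul] at this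
          omega
        exact hπodd ⟨π.im * π.im, by rw [Zsqrtd.norm_def, hre]; ring⟩
      · have hre : π.re = π.im := by
          have := congrArg Zsqrtd.re hu
          simp [Zsqrtd.re_mul] at this
          omega
        exact hπodd ⟨π.im * π.im, by rw [Zsqrtd.norm_def, hre]; ring⟩
    · exact hcop
  refine ⟨hcop, fun hsw => ?_⟩
  have hmul : π * star π ∣ w := hcop.mul_dvd hd hsw
  have h7 : ((π.norm : ℤ) : GaussianInt) ∣ w := by
    rw [Zsqrtd.norm_eq_mul_conj]; exact hmul
  have h8 := content_dvd h7
  rw [hw, Nat.dvd_one] at h8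
  exact hπ.2.1 (Zsqrtd.norm_eq_one_iff.mp h8)

end SGaux

open Zsqrtd Finset SGaux in
/-- Decomposition lemma: if `n ≥ 1` is odd squarefree and `n = β₀β₁β₂β₃` in
`ℤ[i]`, then there are unique units `η_k` with product `1`, positive integers
`b_k`, and primitive primary Gaussian integers `z_{kℓ}` (`k ≠ ℓ`) with
`z_{ℓk} = conj z_{kℓ}`, such that `β_k = η_k b_k ∏_{ℓ≠k} z_{kℓ}` and
`β_k / b_k` is primitive, for each `k`. -/
theorem stmt8 (n : ℕ) (hn : 0 < n) (hodd : Odd n) (hsf : Squarefree n)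
    (β : Fin 4 → GaussianInt)
    (hβ : (n : GaussianInt) = β 0 * β 1 * β 2 * β 3) :
    ∃! d : (Fin 4 → GaussianInt) × (Fin 4 → ℕ) × (Fin 4 → Fin 4 → GaussianInt),
      (∀ k, IsUnit (d.1 k)) ∧
      d.1 0 * d.1 1 * d.1 2 * d.1 3 = 1 ∧
      (∀ k, 0 < d.2.1 k) ∧
      (∀ k, d.2.2 k k = 1) ∧
      (∀ k l, k ≠ l → GIsPrimitive (d.2.2 k l) ∧ GIsPrimary (d.2.2 k l) ∧
        d.2.2 l k = gconj (d.2.2 k l)) ∧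
      (∀ k, β k = d.1 k * (d.2.1 k : GaussianInt) *
        ∏ l ∈ Finset.univ.erase k, d.2.2 k l) ∧
      (∀ k, ∃ w : GaussianInt,
        β k = (d.2.1 k : GaussianInt) * w ∧ GIsPrimitive w) := by
  classical
  -- basic setup
  have hβ' : (n : GaussianInt) = ∏ k : Fin 4, β k := by
    rw [Fin.prod_univ_four]; exact hβ
  have hnG0 : (n : GaussianInt) ≠ 0 := by
    intro hc
    have := congrArg Zsqrtd.re hc
    simp at this
    omega
  have hβ0 : ∀ k, β k ≠ 0 := by
    intro k hk
    exact hnG0 (by rw [hβ']; exact Finset.prod_eq_zero (mem_univ k) hk)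
  have hβdvd : ∀ k, β k ∣ (n : GaussianInt) := by
    intro k; rw [hβ']; exact Finset.dvd_prod_of_mem _ (mem_univ k)
  have hβpair : ∀ j k, j ≠ k → β j * β k ∣ (n : GaussianInt) := by
    intro j k hjk
    rw [hβ', ← Finset.prod_pair hjk]
    exact Finset.prod_dvd_prod_of_subset _ _ _ (fun x _ => mem_univ x)
  have hsfGn : Squarefree (n : GaussianInt) := sfG hodd hsf
  have hSQ : ∀ {x y : GaussianInt}, x * y ∣ (n : GaussianInt) →
      ∀ {π : GaussianInt}, Prime π → π ∣ x → π ∣ y → False := by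
    intro x y hxy π hπ hx hy
    exact hπ.not_unit (hsfGn π ((mul_dvd_mul hx hy).trans hxy))
  have hGodd : ∀ {z : GaussianInt}, z ∣ (n : GaussianInt) → ¬ (2:ℤ) ∣ z.norm := by
    intro z hz hc
    have h3 : z.norm ∣ (n:ℤ) * (n:ℤ) := by
      have := gnorm_dvd hz; rwa [gnorm_natCast] at this
    have h4 : (2:ℤ) ∣ (n:ℤ) * (n:ℤ) := hc.trans h3
    have h5 : ¬ (2:ℤ) ∣ (n:ℤ) := by
      obtain ⟨m, hm⟩ := hodd; omega
    rcases (Int.Prime.dvd_mul' Nat.prime_two h4) with h | h <;> exact h5 h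
  -- contents and primitive parts
  set b : Fin 4 → ℕ := fun k => Int.gcd (β k).re (β k).im with hbdef
  have hbpos : ∀ k, 0 < b k := fun k => (exists_content (hβ0 k)).1
  choose w hwprim hweq using fun k => (exists_content (hβ0 k)).2
  have hwdvdβ : ∀ k, w k ∣ β k := fun k => Dvd.intro_left _ (hweq k).symm
  have hwdvd : ∀ k, w k ∣ (n : GaussianInt) := fun k => (hwdvdβ k).trans (hβdvd k)
  have hw0 : ∀ k, w k ≠ 0 := by
    intro k hk
    exact hβ0 k (by rw [hweq k, hk, mul_zero])
  have hwodd : ∀ k, ¬ (2:ℤ) ∣ (w k).norm := fun k => hGodd (hwdvd k)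
  have hbG0 : ∀ k, ((b k : ℕ) : GaussianInt) ≠ 0 := by
    intro k hk
    have := congrArg Zsqrtd.re hk
    simp at this
    exact (hbpos k).ne' this
  have hbdvdβ : ∀ k, ((b k : ℕ) : GaussianInt) ∣ β k := fun k => ⟨w k, hweq k⟩
  have hbwn : ∀ j k, ((b j : ℕ) : GaussianInt) * w k ∣ (n : GaussianInt) := by
    intro j k
    by_cases hjk : j = k
    · subst hjk; rw [← hweq j]; exact hβdvd j
    · exact (mul_dvd_mul (hbdvdβ j) (hwdvdβ k)).trans (hβpair j k hjk)
  have hwwn : ∀ j k, j ≠ k → w j * w k ∣ (n : GaussianInt) := by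
    intro j k hjk
    exact (mul_dvd_mul (hwdvdβ j) (hwdvdβ k)).trans (hβpair j k hjk)
  -- the pairwise gcds
  set g : Fin 4 → Fin 4 → GaussianInt :=
    fun k l => EuclideanDomain.gcd (w k) (star (w l)) with hgdef
  have hgl : ∀ k l, g k l ∣ w k := fun k l => EuclideanDomain.gcd_dvd_left _ _
  have hgr : ∀ k l, g k l ∣ star (w l) := fun k l => EuclideanDomain.gcd_dvd_right _ _
  have hgprim : ∀ k l, GIsPrimitive (g k l) := fun k l => prim_of_dvd (hwprim k) (hgl k l)
  have hg0 : ∀ k l, g k l ≠ 0 := by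
    intro k l hk
    exact hw0 k ((EuclideanDomain.gcd_eq_zero_iff.mp hk).1)
  have hgodd : ∀ k l, ¬ (2:ℤ) ∣ (g k l).norm := fun k l => hGodd ((hgl k l).trans (hwdvd k))
  -- a prime dividing two entries in row k with different columns is impossible
  have hgcop : ∀ k l l', l ≠ l' → IsCoprime (g k l) (g k l') := by
    intro k l l' hll
    apply EuclideanDomain.isCoprime_of_dvd
    · exact fun hc => hg0 k l hc.1
    · intro z hz hz0 hzl hzl'
      obtain ⟨π, hirr, hπz⟩ := WfDvdMonoid.exists_irreducible_factor hz hz0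
      have hπ : Prime π := hirr.prime
      have h1 : star π ∣ w l := by
        have := star_dvd ((hπz.trans hzl).trans (hgr k l))
        rwa [star_star] at this
      have h2 : star π ∣ w l' := by
        have := star_dvd ((hπz.trans hzl').trans (hgr k l'))
        rwa [star_star] at this
      exact hSQ (hwwn l l' hll) (star_prime hπ) h1 h2
  -- the product of a row of gcds is the primitive part, up to a unit
  set P : Fin 4 → GaussianInt := fun k => ∏ l ∈ Finset.univ.erase k, g k l with hPdef
  have hPdvd : ∀ k, P k ∣ w k := by
    intro k
    apply Finset.prod_dvd_of_coprime
    · intro x hx y hy hxy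
      exact hgcop k x y hxy
    · exact fun l _ => hgl k l
  choose r hr using fun k => hPdvd k
  have hrunit : ∀ k, IsUnit (r k) := by
    intro k
    by_contra hru
    have hr0 : r k ≠ 0 := by
      intro hc
      exact hw0 k (by rw [hr k, hc, mul_zero])
    obtain ⟨π, hirr, hπr⟩ := WfDvdMonoid.exists_irreducible_factor hru hr0
    have hπ : Prime π := hirr.prime
    have hπw : π ∣ w k := (hπr.mul_left _).trans (dvd_of_eq (hr k).symm)
    obtain ⟨hcop, hns⟩ := prime_dvd_primitive hπ (hwprim k) hπw (hwodd k)
    have hsπn : star π ∣ (n : GaussianInt) := by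
      have := star_dvd (hπw.trans (hwdvd k))
      rwa [star_natCast] at this
    rw [hβ'] at hsπn
    obtain ⟨j, _, hj⟩ := (star_prime hπ).exists_mem_finset_dvd hsπn
    rw [hweq j] at hj
    rcases ((star_prime hπ).2.2 _ _ hj) with hc | hc
    · -- star π divides the rational integer b j
      have hπb : π ∣ ((b j : ℕ) : GaussianInt) := by
        have := star_dvd hc
        rwa [star_star, star_natCast] at this
      exact hSQ (hbwn j k) hπ hπb hπw
    · by_cases hjk : j = k
      · exact hns (hjk ▸ hc)
      · have hπswj : π ∣ star (w j) := by
          have := star_dvd hc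
          rwa [star_star] at this
        have hπg : π ∣ g k j := EuclideanDomain.dvd_gcd hπw hπswj
        have hπP : π ∣ P k :=
          hπg.trans (Finset.dvd_prod_of_mem _ (by simp [Finset.mem_erase, hjk]))
        exact hSQ ((dvd_of_eq (hr k).symm).trans (hwdvd k)) hπ hπP hπr
  -- primary normalization of the gcds
  have hnorm : ∀ k l, k ≠ l → ∃ u, IsUnit u ∧ GIsPrimary (u * g k l) := by
    intro k l _
    exact primary_normalize (odd_re_add_im (hgodd k l))
  choose! u huunit huprimary using hnorm
  set Z : Fin 4 → Fin 4 → GaussianInt :=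
    fun k l => if k = l then 1 else u k l * g k l with hZdef
  have hZdiag : ∀ k, Z k k = 1 := fun k => if_pos rfl
  have hZoff : ∀ k l, k ≠ l → Z k l = u k l * g k l := fun k l h => if_neg h
  -- conjugation symmetry of the normalized gcds
  have hgass : ∀ k l, Associated (star (g k l)) (g l k) := by
    intro k l
    apply associated_of_dvd_dvd
    · refine EuclideanDomain.dvd_gcd ?_ (star_dvd (hgl k l))
      have := star_dvd (hgr k l)
      rwa [star_star] at this
    · have h1 : star (g l k) ∣ g k l := by
        refine EuclideanDomain.dvd_gcd ?_ (star_dvd (hgl l k))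
        have := star_dvd (hgr l k)
        rwa [star_star] at this
      have := star_dvd h1
      rwa [star_star] at this
  have hstarZ : ∀ k l, k ≠ l → Z l k = star (Z k l) := by
    intro k l hkl
    obtain ⟨t, ht⟩ := hgass k l
    have hsg : star (g k l) = g l k * ((t⁻¹ : GaussianIntˣ) : GaussianInt) := by
      rw [← ht, mul_assoc]
      simp
    have hc1 : star (Z k l) =
        (star (u k l) * ((t⁻¹ : GaussianIntˣ) : GaussianInt)) * g l k := by
      rw [hZoff k l hkl, star_mul, mul_comm (star (g k l)), hsg]
      ring
    have hcu : IsUnit (star (u k l) * ((t⁻¹ : GaussianIntˣ) : GaussianInt)) :=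
      (isUnit_star.mpr (huunit k l hkl)).mul (Units.isUnit _)
    have hpa : GIsPrimary ((star (u k l) * ((t⁻¹ : GaussianIntˣ) : GaussianInt)) * g l k) := by
      rw [← hc1, hZoff k l hkl]
      exact star_primary (huprimary k l hkl)
    have := primary_eq_of_unit_mul hcu (huunit l k (Ne.symm hkl)) hpa
      (huprimary l k (Ne.symm hkl))
    rw [hZoff l k (Ne.symm hkl), ← this, ← hc1]
  -- the decomposition of each β k
  have hErase : ∀ k, ∏ l ∈ Finset.univ.erase k, Z k l =
      (∏ l ∈ Finset.univ.erase k, u k l) * P k := by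
    intro k
    rw [show P k = ∏ l ∈ Finset.univ.erase k, g k l from rfl, ← Finset.prod_mul_distrib]
    refine Finset.prod_congr rfl (fun l hl => ?_)
    exact hZoff k l (Ne.symm (Finset.mem_erase.mp hl).1)
  have hUunit : ∀ k, IsUnit (∏ l ∈ Finset.univ.erase k, u k l) := by
    intro k
    refine Finset.prod_induction _ _ (fun a b => IsUnit.mul) isUnit_one ?_
    intro l hl
    exact huunit k l (Ne.symm (Finset.mem_erase.mp hl).1)
  choose V hV using fun k => (hUunit k).exists_right_inv
  have hVunit : ∀ k, IsUnit (V k) :=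
    fun k => IsUnit.of_mul_eq_one _ (by rw [mul_comm]; exact hV k)
  set η : Fin 4 → GaussianInt := fun k => r k * V k with hηdef
  have hηunit : ∀ k, IsUnit (η k) := fun k => (hrunit k).mul (hVunit k)
  have hform : ∀ k, β k = η k * ((b k : ℕ) : GaussianInt) *
      ∏ l ∈ Finset.univ.erase k, Z k l := by
    intro k
    rw [hErase k]
    calc β k = ((b k : ℕ) : GaussianInt) * w k := hweq k
      _ = ((b k : ℕ) : GaussianInt) * (P k * r k) := by rw [← hr k]
      _ = η k * ((b k : ℕ) : GaussianInt) *
            ((∏ l ∈ Finset.univ.erase k, u k l) * P k) := by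
          have hVU : V k * (∏ l ∈ Finset.univ.erase k, u k l) = 1 := by
            rw [mul_comm]; exact hV k
          simp only [hηdef]
          linear_combination (-(((b k : ℕ) : GaussianInt) * P k * r k)) * hVU
  -- the product of the units is 1
  have hZ0 : ∀ k l, Z k l ≠ 0 := by
    intro k l
    by_cases hkl : k = l
    · subst hkl; rw [hZdiag]; exact one_ne_zero
    · rw [hZoff k l hkl]
      exact mul_ne_zero (huunit k l hkl).ne_zero (hg0 k l)
  have hex : ∀ (k : Fin 4) (F : Fin 4 → GaussianInt), F k = 1 →
      ∏ l ∈ Finset.univ.erase k, F l = F 0 * F 1 * F 2 * F 3 := by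
    intro k F hFk
    rw [Finset.prod_erase _ hFk, Fin.prod_univ_four]
  have hnormZ : ∀ k l, Z k l * star (Z k l) = (((Z k l).norm : ℤ) : GaussianInt) :=
    fun k l => (Zsqrtd.norm_eq_mul_conj _).symm
  have hNpos : ∀ k l, 0 < (Z k l).norm := by
    intro k l
    rcases lt_or_eq_of_le (Zsqrtd.norm_nonneg (by norm_num) (Z k l)) with h | h
    · exact h
    · exact absurd ((Zsqrtd.norm_eq_zero_iff (by norm_num) _).mp h.symm) (hZ0 k l)
  set c : ℤ := ((b 0 : ℤ) * (b 1 : ℤ) * (b 2 : ℤ) * (b 3 : ℤ)) *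
      ((Z 0 1).norm * (Z 0 2).norm * (Z 0 3).norm *
       (Z 1 2).norm * (Z 1 3).norm * (Z 2 3).norm) with hcdef
  have hcpos : 0 < c := by
    have hb : ∀ k, 0 < (b k : ℤ) := fun k => by exact_mod_cast hbpos k
    exact mul_pos (mul_pos (mul_pos (mul_pos (hb 0) (hb 1)) (hb 2)) (hb 3))
      (mul_pos (mul_pos (mul_pos (mul_pos (mul_pos (hNpos 0 1) (hNpos 0 2)) (hNpos 0 3))
        (hNpos 1 2)) (hNpos 1 3)) (hNpos 2 3))
  have hceq : (n : GaussianInt) = (η 0 * η 1 * η 2 * η 3) * ((c : ℤ) : GaussianInt) := by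
    rw [hβ, hform 0, hform 1, hform 2, hform 3,
      hex 0 _ (hZdiag 0), hex 1 _ (hZdiag 1), hex 2 _ (hZdiag 2), hex 3 _ (hZdiag 3),
      hstarZ 0 1 (by decide), hstarZ 0 2 (by decide), hstarZ 0 3 (by decide),
      hstarZ 1 2 (by decide), hstarZ 1 3 (by decide), hstarZ 2 3 (by decide), hcdef]
    rw [hZdiag 0, hZdiag 1, hZdiag 2, hZdiag 3]
    push_cast
    rw [← hnormZ 0 1, ← hnormZ 0 2, ← hnormZ 0 3, ← hnormZ 1 2, ← hnormZ 1 3, ← hnormZ 2 3]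
    push_cast
    ring
  have hη1 : η 0 * η 1 * η 2 * η 3 = 1 := by
    set E := η 0 * η 1 * η 2 * η 3 with hEdef
    have hEunit : IsUnit E :=
      (((hηunit 0).mul (hηunit 1)).mul (hηunit 2)).mul (hηunit 3)
    have hre : (n : ℤ) = E.re * c := by
      have := congrArg Zsqrtd.re hceq
      simpa [Zsqrtd.re_mul, Zsqrtd.im_mul] using this
    have him : 0 = E.im * c := by
      have := congrArg Zsqrtd.im hceq
      simpa [Zsqrtd.re_mul, Zsqrtd.im_mul] using this
    have hn' : 0 < (n : ℤ) := by exact_mod_cast hn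
    rcases unit_cases hEunit with h | h | h | h <;> rw [h] <;> rw [h] at hre him <;>
      simp at hre him <;> first | rfl | nlinarith
  -- package the existence witness
  refine ⟨(η, b, Z), ⟨hηunit, hη1, hbpos, hZdiag, ?_, hform, fun k => ⟨w k, hweq k, hwprim k⟩⟩, ?_⟩
  · show ∀ k l, k ≠ l → GIsPrimitive (Z k l) ∧ GIsPrimary (Z k l) ∧ Z l k = gconj (Z k l)
    intro k l hkl
    refine ⟨?_, ?_, ?_⟩
    · refine prim_of_dvd (hgprim k l) ?_
      obtain ⟨uu, huu⟩ := huunit k l hkl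
      refine ⟨((uu⁻¹ : GaussianIntˣ) : GaussianInt), ?_⟩
      rw [hZoff k l hkl, ← huu, mul_comm ((uu : GaussianInt)) (g k l), mul_assoc]
      simp
    · rw [hZoff k l hkl]; exact huprimary k l hkl
    · rw [gconj_eq_star]; exact hstarZ k l hkl
  -- uniqueness
  rintro ⟨η', b', Z'⟩ ⟨hu', hprodη', hbpos', hdiag', hzprop', hform', hcont'⟩
  replace hu' : ∀ k, IsUnit (η' k) := hu'
  replace hdiag' : ∀ k : Fin 4, Z' k k = 1 := hdiag'
  replace hzprop' : ∀ k l, k ≠ l → GIsPrimitive (Z' k l) ∧ GIsPrimary (Z' k l) ∧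
      Z' l k = gconj (Z' k l) := hzprop'
  replace hform' : ∀ k, β k = η' k * ((b' k : ℕ) : GaussianInt) *
      ∏ l ∈ Finset.univ.erase k, Z' k l := hform'
  replace hcont' : ∀ k, ∃ w', β k = ((b' k : ℕ) : GaussianInt) * w' ∧ GIsPrimitive w' := hcont'
  have hbeq : b' = b := by
    funext k
    obtain ⟨w', hw'e, hw'p⟩ := hcont' k
    exact (content_unique hw'p hw'e).trans (congrFun hbdef k).symm
  subst hbeq
  -- the primitive part of β k factors through the row products of Z'
  have hwη : ∀ k, w k = η' k * ∏ l ∈ Finset.univ.erase k, Z' k l := by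
    intro k
    apply mul_left_cancel₀ (hbG0 k)
    have h1 := (hweq k).symm.trans (hform' k)
    linear_combination h1
  have hprod'0 : ∀ k, (∏ l ∈ Finset.univ.erase k, Z' k l) ≠ 0 := by
    intro k
    have h0 : η' k * ∏ l ∈ Finset.univ.erase k, Z' k l ≠ 0 := (hwη k) ▸ (hw0 k)
    exact right_ne_zero_of_mul h0
  have hprod'dvd : ∀ k, (∏ l ∈ Finset.univ.erase k, Z' k l) ∣ w k :=
    fun k => Dvd.intro_left _ (hwη k).symm
  have hZ'dvdw : ∀ k l, k ≠ l → Z' k l ∣ w k := by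
    intro k l hkl
    exact (Finset.dvd_prod_of_mem _ (by simp [Finset.mem_erase, Ne.symm hkl])).trans
      (hprod'dvd k)
  have hZ'g : ∀ k l, k ≠ l → Z' k l ∣ g k l := by
    intro k l hkl
    refine EuclideanDomain.dvd_gcd (hZ'dvdw k l hkl) ?_
    have h1 : star (Z' k l) ∣ w l := by
      rw [← gconj_eq_star, ← (hzprop' k l hkl).2.2]
      exact hZ'dvdw l k (Ne.symm hkl)
    have := star_dvd h1
    rwa [star_star] at this
  have hc' : ∀ k l, k ≠ l → ∃ tt, g k l = Z' k l * tt := fun k l h => hZ'g k l h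
  choose! t ht using hc'
  have htunit : ∀ k l, k ≠ l → IsUnit (t k l) := by
    intro k l hkl
    have hPg : P k = (∏ l ∈ Finset.univ.erase k, Z' k l) * ∏ l ∈ Finset.univ.erase k, t k l := by
      rw [show P k = ∏ l ∈ Finset.univ.erase k, g k l from rfl, ← Finset.prod_mul_distrib]
      refine Finset.prod_congr rfl (fun l' hl' => ?_)
      exact ht k l' (Ne.symm (Finset.mem_erase.mp hl').1)
    have hkey : (∏ l ∈ Finset.univ.erase k, Z' k l) * ((∏ l ∈ Finset.univ.erase k, t k l) * r k) =
        (∏ l ∈ Finset.univ.erase k, Z' k l) * η' k := by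
      have h1 : P k * r k = η' k * ∏ l ∈ Finset.univ.erase k, Z' k l := (hr k).symm.trans (hwη k)
      rw [hPg] at h1
      linear_combination h1
    have h2 : (∏ l ∈ Finset.univ.erase k, t k l) * r k = η' k :=
      mul_left_cancel₀ (hprod'0 k) hkey
    have h3 : IsUnit (∏ l ∈ Finset.univ.erase k, t k l) :=
      isUnit_of_mul_isUnit_left (by rw [h2]; exact hu' k)
    exact isUnit_of_dvd_unit
      (Finset.dvd_prod_of_mem _ (by simp [Finset.mem_erase, Ne.symm hkl])) h3
  have hZeq : Z' = Z := by
    funext k l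
    by_cases hkl : k = l
    · subst hkl; rw [hdiag' k, hZdiag k]  -- may need adjusting
    · obtain ⟨tu, htu⟩ := htunit k l hkl
      have hZ'g2 : Z' k l = ((tu⁻¹ : GaussianIntˣ) : GaussianInt) * g k l := by
        rw [ht k l hkl, ← htu]
        rw [mul_comm (Z' k l) ((tu : GaussianInt)), ← mul_assoc]
        simp
      have hpa : GIsPrimary (((tu⁻¹ : GaussianIntˣ) : GaussianInt) * g k l) := by
        rw [← hZ'g2]; exact (hzprop' k l hkl).2.1
      have := primary_eq_of_unit_mul (Units.isUnit _) (huunit k l hkl) hpa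
        (huprimary k l hkl)
      rw [hZ'g2, this, ← hZoff k l hkl]
  subst hZeq
  have hηeq : η' = η := by
    funext k
    have hX0 : ((b k : ℕ) : GaussianInt) * (∏ l ∈ Finset.univ.erase k, Z k l) ≠ 0 :=
      mul_ne_zero (hbG0 k) (hprod'0 k)
    apply mul_right_cancel₀ hX0
    have h1 := (hform' k).symm.trans (hform k)
    linear_combination h1
  subst hηeq
  rfl
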